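/- Under the repeated cross-sectional sampling assumption T ⫫ (Y₁, Y₀, D₁, D₀) | X, Z, if the multiplicative structural mean model with X empty and m = 0 implies E(Y_t e^{−βD_t} | Z) is the same ratio structure across Z, then the observed-data identity E(Y e^{−βD} | T=1, Z=1)·E(Y e^{−βD} | T=0, Z=0) = E(Y e^{−βD} | T=0, Z=1)·E(Y e^{−βD} | T=1, Z=0) holds, where Y = Y₁·1{T=1} + Y₀·1{T=0} and D = D₁·1{T=1} + D₀·1{T=0}. -/

import Mathlib

open MeasureTheory ProbabilityTheory Real

/-- Under repeated cross-sectional sampling T ⫫ (Y₁,Y₀,D₁,D₀) | Z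
(no covariates), the panel-data moment identity implies the observed-data identity
E(Ye^{−βD}|T=1,Z=1)·E(Ye^{−βD}|T=0,Z=0) = E(Ye^{−βD}|T=0,Z=1)·E(Ye^{−βD}|T=1,Z=0). -/
theorem repeated_cross_section_identity
    {Ω : Type*} {mΩ : MeasurableSpace Ω} [StandardBorelSpace Ω] [Nonempty Ω]
    (μ : Measure Ω) [IsProbabilityMeasure μ]
    (T Z : Ω → ℝ) (D Yt : Fin 2 → Ω → ℝ) (β : ℝ)
    (hT : Measurable T) (hZ : Measurable Z)
    (hD : ∀ t, Measurable (D t)) (hYt : ∀ t, Measurable (Yt t))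
    (hTbin : ∀ ω, T ω = 0 ∨ T ω = 1)
    (hZbin : ∀ ω, Z ω = 0 ∨ Z ω = 1)
    (hDbin : ∀ t ω, D t ω = 0 ∨ D t ω = 1)
    -- observed Y and D
    (Y Dobs : Ω → ℝ)
    (hY : Y = fun ω => Yt 1 ω * (if T ω = 1 then 1 else 0)
                + Yt 0 ω * (if T ω = 0 then 1 else 0))
    (hDobs : Dobs = fun ω => D 1 ω * (if T ω = 1 then 1 else 0)
                + D 0 ω * (if T ω = 0 then 1 else 0))
    -- Assumption 4: T ⫫ (Y₁, Y₀, D₁, D₀) | Z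
    (hindep : CondIndepFun (MeasurableSpace.comap Z inferInstance) hZ.comap_le
      T (fun ω => (Yt 1 ω, Yt 0 ω, D 1 ω, D 0 ω)) μ)
    -- positive probability of all conditioning events
    (hpos : ∀ t z : ℝ, (t = 0 ∨ t = 1) → (z = 0 ∨ z = 1) →
      μ {ω | T ω = t ∧ Z ω = z} ≠ 0)
    -- panel-data identity
    (hpanel :
      (∫ ω, Yt 1 ω * Real.exp (-β * D 1 ω) ∂(μ[|{ω | Z ω = 1}]))
        * (∫ ω, Yt 0 ω * Real.exp (-β * D 0 ω) ∂(μ[|{ω | Z ω = 0}]))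
      = (∫ ω, Yt 0 ω * Real.exp (-β * D 0 ω) ∂(μ[|{ω | Z ω = 1}]))
        * (∫ ω, Yt 1 ω * Real.exp (-β * D 1 ω) ∂(μ[|{ω | Z ω = 0}]))) :
    (∫ ω, Y ω * Real.exp (-β * Dobs ω) ∂(μ[|{ω | T ω = 1 ∧ Z ω = 1}]))
      * (∫ ω, Y ω * Real.exp (-β * Dobs ω) ∂(μ[|{ω | T ω = 0 ∧ Z ω = 0}]))
    = (∫ ω, Y ω * Real.exp (-β * Dobs ω) ∂(μ[|{ω | T ω = 0 ∧ Z ω = 1}]))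
      * (∫ ω, Y ω * Real.exp (-β * Dobs ω) ∂(μ[|{ω | T ω = 1 ∧ Z ω = 0}])) := by
  classical
  set W : Ω → ℝ × ℝ × ℝ × ℝ := fun ω => (Yt 1 ω, Yt 0 ω, D 1 ω, D 0 ω) with hWdef
  have hW : Measurable W :=
    (hYt 1).prod ((hYt 0).prod ((hD 1).prod (hD 0)))
  rw [condIndepFun_iff_condExp_inter_preimage_eq_mul hT hW] at hindep
  -- key conditional independence identity at the measure level
  have hkey : ∀ (t' z : ℝ) (S : Set (ℝ × ℝ × ℝ × ℝ)), MeasurableSet S → μ (Z ⁻¹' {z}) ≠ 0 →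
      μ (W ⁻¹' S ∩ (T ⁻¹' {t'} ∩ Z ⁻¹' {z})) * μ (Z ⁻¹' {z})
        = μ (W ⁻¹' S ∩ Z ⁻¹' {z}) * μ (T ⁻¹' {t'} ∩ Z ⁻¹' {z}) := by
    intro t' z S hS hz0
    set A := T ⁻¹' {t'} with hAdef
    set B := W ⁻¹' S with hBdef
    set Zz := Z ⁻¹' {z} with hZzdef
    have hA : MeasurableSet A := hT (measurableSet_singleton _)
    have hB : MeasurableSet B := hW hS
    have hZz : MeasurableSet Zz := hZ (measurableSet_singleton _)
    have hZzcm : MeasurableSet[(MeasurableSpace.comap Z inferInstance)] Zz := ⟨{z}, measurableSet_singleton _, rfl⟩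
    have h := hindep {t'} S (measurableSet_singleton _) hS
    obtain ⟨ω₀, hω₀⟩ : Zz.Nonempty := nonempty_of_measure_ne_zero hz0
    set φA := (μ⟦A | (MeasurableSpace.comap Z inferInstance)⟧) with hφA
    set φB := (μ⟦B | (MeasurableSpace.comap Z inferInstance)⟧) with hφB
    have hφBmeas : Measurable[(MeasurableSpace.comap Z inferInstance)] φB := stronglyMeasurable_condExp.measurable
    set c : ℝ := φB ω₀ with hc
    have hconst : ∀ ω ∈ Zz, φB ω = c := by
      intro ω hω
      obtain ⟨S', _, hE⟩ := hφBmeas (measurableSet_singleton c)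
      have h0 : ω₀ ∈ Z ⁻¹' S' := by
        rw [hE]; exact rfl
      have hzz : Z ω = Z ω₀ := by
        have h1 : Z ω = z := hω
        have h2 : Z ω₀ = z := hω₀
        rw [h1, h2]
      have : ω ∈ Z ⁻¹' S' := by
        simp only [Set.mem_preimage] at h0 ⊢
        rwa [hzz]
      rw [hE] at this
      exact this
    have hintA : Integrable (A.indicator (fun _ => (1:ℝ))) μ :=
      (integrable_const (1:ℝ)).indicator hA
    have hintB : Integrable (B.indicator (fun _ => (1:ℝ))) μ :=
      (integrable_const (1:ℝ)).indicator hB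
    have hintAB : Integrable ((A ∩ B).indicator (fun _ => (1:ℝ))) μ :=
      (integrable_const (1:ℝ)).indicator (hA.inter hB)
    have e1 : ∫ ω in Zz, (μ⟦A ∩ B | (MeasurableSpace.comap Z inferInstance)⟧) ω ∂μ = (μ ((A ∩ B) ∩ Zz)).toReal := by
      rw [setIntegral_condExp hZ.comap_le hintAB hZzcm, setIntegral_indicator (hA.inter hB)]
      simp [Set.inter_comm, measureReal_def]
    have e2 : ∫ ω in Zz, φA ω ∂μ = (μ (A ∩ Zz)).toReal := by
      rw [hφA, setIntegral_condExp hZ.comap_le hintA hZzcm, setIntegral_indicator hA]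
      simp [Set.inter_comm, measureReal_def]
    have e3 : ∫ ω in Zz, φB ω ∂μ = (μ (B ∩ Zz)).toReal := by
      rw [hφB, setIntegral_condExp hZ.comap_le hintB hZzcm, setIntegral_indicator hB]
      simp [Set.inter_comm, measureReal_def]
    have e4 : ∫ ω in Zz, φB ω ∂μ = c * (μ Zz).toReal := by
      rw [setIntegral_congr_fun hZz (fun ω hω => hconst ω hω)]
      simp [mul_comm, measureReal_def]
    have e5 : ∫ ω in Zz, (μ⟦A ∩ B | (MeasurableSpace.comap Z inferInstance)⟧) ω ∂μ = (∫ ω in Zz, φA ω ∂μ) * c := by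
      rw [integral_congr_ae (ae_restrict_of_ae h)]
      have : ∀ ω ∈ Zz, φA ω * φB ω = φA ω * c := fun ω hω => by rw [hconst ω hω]
      rw [setIntegral_congr_fun hZz this, integral_mul_const]
    have r1 : (μ ((A ∩ B) ∩ Zz)).toReal = (μ (A ∩ Zz)).toReal * c := by
      rw [← e1, e5, e2]
    have r2 : (μ (B ∩ Zz)).toReal = c * (μ Zz).toReal := by rw [← e3, e4]
    have hgoal : (μ (B ∩ (A ∩ Zz)) * μ Zz).toReal = (μ (B ∩ Zz) * μ (A ∩ Zz)).toReal := by
      rw [ENNReal.toReal_mul, ENNReal.toReal_mul]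
      have hBA : B ∩ (A ∩ Zz) = (A ∩ B) ∩ Zz := by
        rw [← Set.inter_assoc, Set.inter_comm B A]
      rw [hBA, r1, r2]; ring
    exact (ENNReal.toReal_eq_toReal_iff'
      (ENNReal.mul_ne_top (measure_ne_top _ _) (measure_ne_top _ _))
      (ENNReal.mul_ne_top (measure_ne_top _ _) (measure_ne_top _ _))).mp hgoal
  -- main per-cell reduction
  have hcondmem : ∀ s : Set Ω, MeasurableSet s → ∀ᵐ ω ∂(μ[|s]), ω ∈ s := by
    intro s hs
    rw [ae_iff]
    have : {ω | ¬ ω ∈ s} = sᶜ := rfl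
    rw [this, cond_apply hs μ, Set.inter_compl_self, measure_empty, mul_zero]
  have main : ∀ (t' z : ℝ) (idx : Fin 2),
      (∀ ω, T ω = t' → Y ω = Yt idx ω ∧ Dobs ω = D idx ω) →
      μ {ω | T ω = t' ∧ Z ω = z} ≠ 0 →
      ∫ ω, Y ω * Real.exp (-β * Dobs ω) ∂(μ[|{ω | T ω = t' ∧ Z ω = z}])
        = ∫ ω, Yt idx ω * Real.exp (-β * D idx ω) ∂(μ[|{ω | Z ω = z}]) := by
    intro t' z idx hmatch hne
    have hsets : {ω | T ω = t' ∧ Z ω = z} = T ⁻¹' {t'} ∩ Z ⁻¹' {z} := rfl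
    have hsetz : {ω | Z ω = z} = Z ⁻¹' {z} := rfl
    rw [hsets, hsetz] at *
    set s : Set Ω := T ⁻¹' {t'} ∩ Z ⁻¹' {z} with hsdef
    have hsm : MeasurableSet s :=
      (hT (measurableSet_singleton _)).inter (hZ (measurableSet_singleton _))
    have hmz : μ (Z ⁻¹' {z}) ≠ 0 := by
      intro h
      exact hne (measure_mono_null Set.inter_subset_right h)
    -- step a : replace integrand on s
    have hstep1 : ∫ ω, Y ω * Real.exp (-β * Dobs ω) ∂(μ[|s])
        = ∫ ω, Yt idx ω * Real.exp (-β * D idx ω) ∂(μ[|s]) := by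
      refine integral_congr_ae ?_
      filter_upwards [hcondmem s hsm] with ω hω
      obtain ⟨h1, h2⟩ := hmatch ω hω.1
      rw [h1, h2]
    -- the functional on ℝ⁴
    set f : ℝ × ℝ × ℝ × ℝ → ℝ :=
      (if idx = 1 then (fun p => p.1 * Real.exp (-β * p.2.2.1))
        else (fun p => p.2.1 * Real.exp (-β * p.2.2.2))) with hfdef
    have hf : Measurable f := by
      rw [hfdef]; split_ifs <;> fun_prop
    have hfW : ∀ ω, f (W ω) = Yt idx ω * Real.exp (-β * D idx ω) := by
      intro ω
      fin_cases idx <;> simp [hfdef, hWdef]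
    -- pushforward equality
    have hmap : Measure.map W (μ[|s]) = Measure.map W (μ[|Z ⁻¹' {z}]) := by
      ext S hS
      rw [Measure.map_apply hW hS, Measure.map_apply hW hS, cond_apply hsm μ,
        cond_apply (hZ (measurableSet_singleton _)) μ]
      have hk := hkey t' z S hS hmz
      set a := μ (W ⁻¹' S ∩ s) with ha
      set b := μ (W ⁻¹' S ∩ Z ⁻¹' {z}) with hb
      set cc := μ s with hcc
      set d := μ (Z ⁻¹' {z}) with hd
      have hc0 : cc ≠ 0 := hne
      have hct : cc ≠ ⊤ := measure_ne_top _ _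
      have hd0 : d ≠ 0 := hmz
      have hdt : d ≠ ⊤ := measure_ne_top _ _
      have hk' : a * d = b * cc := hk
      rw [Set.inter_comm s, Set.inter_comm (Z ⁻¹' {z})]
      calc cc⁻¹ * a = cc⁻¹ * a * (d * d⁻¹) := by
            rw [ENNReal.mul_inv_cancel hd0 hdt, mul_one]
        _ = cc⁻¹ * (a * d) * d⁻¹ := by ring
        _ = cc⁻¹ * (b * cc) * d⁻¹ := by rw [hk']
        _ = (cc⁻¹ * cc) * (d⁻¹ * b) := by ring
        _ = d⁻¹ * b := by rw [ENNReal.inv_mul_cancel hc0 hct, one_mul]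
    calc ∫ ω, Y ω * Real.exp (-β * Dobs ω) ∂(μ[|s])
        = ∫ ω, f (W ω) ∂(μ[|s]) := by
          rw [hstep1]; exact integral_congr_ae (ae_of_all _ fun ω => (hfW ω).symm)
      _ = ∫ p, f p ∂(Measure.map W (μ[|s])) :=
          (integral_map hW.aemeasurable hf.aestronglyMeasurable).symm
      _ = ∫ p, f p ∂(Measure.map W (μ[|Z ⁻¹' {z}])) := by rw [hmap]
      _ = ∫ ω, f (W ω) ∂(μ[|Z ⁻¹' {z}]) :=
          integral_map hW.aemeasurable hf.aestronglyMeasurable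
      _ = ∫ ω, Yt idx ω * Real.exp (-β * D idx ω) ∂(μ[|Z ⁻¹' {z}]) :=
          integral_congr_ae (ae_of_all _ fun ω => hfW ω)
  have m11 := main 1 1 1 (fun ω h => by constructor <;> simp [hY, hDobs, h] <;> norm_num)
    (hpos 1 1 (Or.inr rfl) (Or.inr rfl))
  have m00 := main 0 0 0 (fun ω h => by constructor <;> simp [hY, hDobs, h] <;> norm_num)
    (hpos 0 0 (Or.inl rfl) (Or.inl rfl))
  have m01 := main 0 1 0 (fun ω h => by constructor <;> simp [hY, hDobs, h] <;> norm_num)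
    (hpos 0 1 (Or.inl rfl) (Or.inr rfl))
  have m10 := main 1 0 1 (fun ω h => by constructor <;> simp [hY, hDobs, h] <;> norm_num)
    (hpos 1 0 (Or.inr rfl) (Or.inl rfl))
  rw [m11, m00, m01, m10]
  exact hpanel
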